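/- Let b > 0 and let t ≥ 0, and let S, T be finite sets. If t² - (2b√|S∪T|/√n) t + (3b²(|S|-|T|))/n ≤ 0, then t ≤ 3b√|T|/√n. -/

import Mathlib

/-- The key quadratic inequality: if `t ≥ 0` satisfies
`t² - (2b√|S∪T|/√n)t + 3b²(|S|-|T|)/n ≤ 0` then `t ≤ 3b√|T|/√n`. -/
theorem quadratic_bound (n b t : ℝ) (S T : Finset ℕ) (hn : 0 < n) (hb : 0 < b) (ht : 0 ≤ t)
    (h : t ^ 2 - (2 * b * Real.sqrt ((S ∪ T).card) / Real.sqrt n) * t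
        + 3 * b ^ 2 * ((S.card : ℝ) - (T.card : ℝ)) / n ≤ 0) :
    t ≤ 3 * b * Real.sqrt (T.card) / Real.sqrt n := by
  set a := Real.sqrt ((S ∪ T).card) with ha
  set r := Real.sqrt (T.card) with hr
  set m := Real.sqrt n with hmm
  have hm : (0:ℝ) < m := Real.sqrt_pos.mpr hn
  have ha2 : a ^ 2 = ((S ∪ T).card : ℝ) := Real.sq_sqrt (by positivity)
  have hr2 : r ^ 2 = ((T.card : ℕ) : ℝ) := Real.sq_sqrt (by positivity)
  have hn2 : m ^ 2 = n := Real.sq_sqrt hn.le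
  have hcard : ((S ∪ T).card : ℝ) ≤ (S.card : ℝ) + (T.card : ℝ) := by
    exact_mod_cast Finset.card_union_le S T
  have ha0 : 0 ≤ a := Real.sqrt_nonneg _
  have hr0 : 0 ≤ r := Real.sqrt_nonneg _
  clear_value a r m
  clear ha hr hmm
  by_contra hc
  push_neg at hc
  rw [div_lt_iff₀ hm] at hc
  -- clear denominators in h
  rw [← hn2] at h
  have h3 : m ^ 2 * t ^ 2 - 2 * b * a * m * t + 3 * b ^ 2 * ((S.card : ℝ) - (T.card : ℝ)) ≤ 0 := by
    have e : m ^ 2 * (t ^ 2 - (2 * b * a / m) * t + 3 * b ^ 2 * ((S.card : ℝ) - (T.card : ℝ)) / m ^ 2)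
        = m ^ 2 * t ^ 2 - 2 * b * a * m * t + 3 * b ^ 2 * ((S.card : ℝ) - (T.card : ℝ)) := by
      field_simp
    nlinarith [mul_nonpos_of_nonneg_of_nonpos (sq_nonneg m) h, e]
  have hcs : a ^ 2 - r ^ 2 ≤ (S.card : ℝ) := by rw [ha2, hr2]; linarith
  -- key quadratic in u = t*m
  have h4 : (t * m) ^ 2 - 2 * b * a * (t * m) + 3 * b ^ 2 * a ^ 2 - 6 * b ^ 2 * r ^ 2 ≤ 0 := by
    nlinarith [mul_le_mul_of_nonneg_left hcs (by positivity : (0:ℝ) ≤ 3 * b ^ 2), h3, hr2]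
  have hu : 3 * b * r < t * m := hc
  rcases le_or_gt a (3 * r) with hle | hlt
  · -- Q = (u-3br)² + 2b(u-3br)(3r-a) + 3b²(r-a)² > 0
    nlinarith [mul_pos (sub_pos.mpr hu) (sub_pos.mpr hu),
      mul_nonneg (mul_nonneg hb.le (sub_pos.mpr hu).le) (sub_nonneg.mpr hle),
      sq_nonneg (b * (r - a))]
  · -- Q = (u - ba)² + 2b²(a² - 3r²) > 0 since a > 3r ≥ 0
    have har : 0 < a + 3 * r := by linarith
    have key : 0 < b ^ 2 * (a ^ 2 - 3 * r ^ 2) := by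
      nlinarith [mul_pos (sub_pos.mpr hlt) har, mul_pos hb hb, sq_nonneg (b * r)]
    have sqe : (t * m - b * a) ^ 2 = (t * m) ^ 2 - 2 * b * a * (t * m) + b ^ 2 * a ^ 2 := by ring
    linarith [sq_nonneg (t * m - b * a), key, h4, sqe]
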